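/- arXiv:1902.01310 — 2 statements merged into one kernel-verified Lean document; each statement's English description precedes it below -/
import Mathlib

section
/- Let E and Ê be real Banach spaces (the fine and coarse discretization spaces). Let T : E →L[ℝ] E, T̂ : Ê →L[ℝ] Ê, and R : E →L[ℝ] Ê be continuous linear maps, let f : E → E and f̂ : Ê → Ê be maps, and let ê : E → Ê be a map such that the Full Approximation Scheme relation f̂(ê(u) + R u) - T̂(ê(u)) - f̂(R u) + R(f(u) - T u) = 0 holds for all u ∈ E. Fix u₀ ∈ E; suppose ê is Fréchet differentiable at u₀, f is Fréchet differentiable at u₀, and f̂ is Fréchet differentiable at both ê(u₀) + R u₀ and R u₀. Then [f̂'(ê(u₀) + R u₀) - T̂] ∘ ê'(u₀) = -(f̂'(ê(u₀) + R u₀) - f̂'(R u₀)) ∘ R - R ∘ (f'(u₀) - T). -/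
/-- Differentiating the Full Approximation Scheme relation
`fhat(ehat(u) + R u) - That(ehat(u)) - fhat(R u) + R (f(u) - T u) = 0` at `u₀`
gives
`[fhat'(ehat(u₀) + R u₀) - That] ∘ ehat'(u₀)
  = -(fhat'(ehat(u₀) + R u₀) - fhat'(R u₀)) ∘ R - R ∘ (f'(u₀) - T)`,
where `E` is the fine space and `Ehat` the coarse space. -/
theorem fas_jacobian_relation
    (E Ehat : Type*) [NormedAddCommGroup E] [NormedSpace ℝ E] [CompleteSpace E]
    [NormedAddCommGroup Ehat] [NormedSpace ℝ Ehat] [CompleteSpace Ehat]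
    (T : E →L[ℝ] E) (That : Ehat →L[ℝ] Ehat) (R : E →L[ℝ] Ehat)
    (f : E → E) (fhat : Ehat → Ehat) (ehat : E → Ehat)
    (hFAS : ∀ u : E,
      fhat (ehat u + R u) - That (ehat u) - fhat (R u) + R (f u - T u) = 0)
    (u₀ : E) (ehat' : E →L[ℝ] Ehat) (f' : E →L[ℝ] E) (B C : Ehat →L[ℝ] Ehat)
    (hehat : HasFDerivAt ehat ehat' u₀)
    (hf : HasFDerivAt f f' u₀)
    (hB : HasFDerivAt fhat B (ehat u₀ + R u₀))
    (hC : HasFDerivAt fhat C (R u₀)) :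
    (B - That).comp ehat' = -((B - C).comp R) - R.comp (f' - T) := by
  have h1 : HasFDerivAt (fun u => ehat u + R u) (ehat' + R) u₀ :=
    hehat.add R.hasFDerivAt
  have h2 : HasFDerivAt (fun u => fhat (ehat u + R u)) (B.comp (ehat' + R)) u₀ :=
    hB.comp u₀ h1
  have h3 : HasFDerivAt (fun u => That (ehat u)) (That.comp ehat') u₀ :=
    That.hasFDerivAt.comp u₀ hehat
  have h4 : HasFDerivAt (fun u => fhat (R u)) (C.comp R) u₀ :=
    hC.comp u₀ R.hasFDerivAt
  have h5 : HasFDerivAt (fun u => R (f u - T u)) (R.comp (f' - T)) u₀ :=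
    R.hasFDerivAt.comp u₀ (hf.sub T.hasFDerivAt)
  have hg : HasFDerivAt
      (fun u => fhat (ehat u + R u) - That (ehat u) - fhat (R u) + R (f u - T u))
      (B.comp (ehat' + R) - That.comp ehat' - C.comp R + R.comp (f' - T)) u₀ :=
    ((h2.sub h3).sub h4).add h5
  have heq : (fun u => fhat (ehat u + R u) - That (ehat u) - fhat (R u) + R (f u - T u))
      = fun _ : E => (0 : Ehat) := funext hFAS
  rw [heq] at hg
  have hD : B.comp (ehat' + R) - That.comp ehat' - C.comp R + R.comp (f' - T) = 0 :=
    hg.unique (hasFDerivAt_const 0 u₀)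
  ext x
  have := ContinuousLinearMap.ext_iff.mp hD x
  simp only [ContinuousLinearMap.coe_comp', Function.comp_apply,
    ContinuousLinearMap.add_apply, ContinuousLinearMap.sub_apply,
    ContinuousLinearMap.zero_apply, ContinuousLinearMap.neg_apply,
    ContinuousLinearMap.coe_sub', ContinuousLinearMap.coe_add',
    Pi.sub_apply, Pi.add_apply, map_add, map_sub] at this ⊢
  have h0 : B (ehat' x) - That (ehat' x) -
      (-(B (R x) - C (R x)) - (R (f' x) - R (T x))) = 0 := by
    rw [← this]; abel
  have h1 := sub_eq_zero.mp h0
  exact h1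
end

section
/- Let E be a real Banach space, let T : E →L[ℝ] E be a continuous linear map, and let f : E → E and w : E → E be maps such that f(w(u)) = T u for all u ∈ E. Define g : E → E by g(u) = u - w(u). Fix u₀ ∈ E with g(u₀) = 0, suppose w is Fréchet differentiable at u₀, and suppose f is Fréchet differentiable at u₀ with derivative equal to a continuous linear equivalence A : E ≃L[ℝ] E. Then g is Fréchet differentiable at u₀ with g'(u₀) = I - A⁻¹ ∘ T; that is, at a root of g the Jacobian of the SNK preconditioned residual coincides with the additive-Schwarz preconditioned Jacobian I - [f'(u₀)]⁻¹ ∘ T of the NKS linearization. -/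
/-- At a root `u₀` of the SNK residual `g(u) = u - w(u)` (where
`f (w u) = T u` for all `u`), if `w` is differentiable at `u₀` and `f` is
differentiable at `u₀` with derivative a continuous linear equivalence `A`,
then `g` is differentiable at `u₀` with derivative `I - A⁻¹ ∘ T`, the
additive-Schwarz preconditioned Jacobian of the NKS linearization. -/
theorem snk_jacobian_at_root
    (E : Type*) [NormedAddCommGroup E] [NormedSpace ℝ E] [CompleteSpace E]
    (T : E →L[ℝ] E) (f w : E → E)
    (hfw : ∀ u : E, f (w u) = T u)
    (g : E → E) (hg : ∀ u : E, g u = u - w u)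
    (u₀ : E) (hroot : g u₀ = 0)
    (A : E ≃L[ℝ] E)
    (hw : DifferentiableAt ℝ w u₀)
    (hf : HasFDerivAt f (A : E →L[ℝ] E) u₀) :
    HasFDerivAt g
      (ContinuousLinearMap.id ℝ E - (A.symm : E →L[ℝ] E).comp T) u₀ := by
  have hwu : w u₀ = u₀ := by
    have := hg u₀
    rw [hroot] at this
    have := sub_eq_zero.mp this.symm
    exact this.symm
  set W := fderiv ℝ w u₀ with hW
  have hwd : HasFDerivAt w W u₀ := hw.hasFDerivAt
  have hcomp : HasFDerivAt (f ∘ w) ((A : E →L[ℝ] E).comp W) u₀ := by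
    have hf' : HasFDerivAt f (A : E →L[ℝ] E) (w u₀) := by rwa [hwu]
    exact hf'.comp u₀ hwd
  have hT : HasFDerivAt (f ∘ w) T u₀ := by
    have : (f ∘ w) = fun u => T u := funext fun u => hfw u
    rw [this]
    exact T.hasFDerivAt
  have hAW : (A : E →L[ℝ] E).comp W = T := hcomp.unique hT
  have hWeq : W = (A.symm : E →L[ℝ] E).comp T := by
    rw [← hAW]
    ext x
    simp
  have : HasFDerivAt g (ContinuousLinearMap.id ℝ E - W) u₀ := by
    have : HasFDerivAt (fun u => u - w u) (ContinuousLinearMap.id ℝ E - W) u₀ :=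
      (hasFDerivAt_id u₀).sub hwd
    exact this.congr_of_eventuallyEq (Filter.Eventually.of_forall fun u => (hg u))
  rwa [hWeq] at this
end
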